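/- The BBP formula holds: π = Σ_{k=0}^{∞} 16^{−k} ( 4/(8k+1) − 2/(8k+4) − 1/(8k+5) − 1/(8k+6) ). -/

import Mathlib

open MeasureTheory Real Set

/-- Antiderivative for the BBP integral. -/
noncomputable def bbpF (y : ℝ) : ℝ :=
  2 * Real.log (2 - y ^ 2) - 2 * Real.log (y ^ 2 - 2 * y + 2) + 4 * Real.arctan (y - 1)

lemma bbp_hasDerivAt {y : ℝ} (hy : y ∈ Set.Icc (0 : ℝ) 1) :
    HasDerivAt bbpF (16 * (4 - 2 * y ^ 3 - y ^ 4 - y ^ 5) / (16 - y ^ 8)) y := by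
  obtain ⟨h0, h1⟩ := hy
  have hd1 : (2 - y ^ 2) ≠ 0 := by nlinarith
  have hd2 : (y ^ 2 - 2 * y + 2) ≠ 0 := by nlinarith [sq_nonneg (y - 1)]
  have hd3 : (16 - y ^ 8) ≠ 0 := by nlinarith [pow_le_one₀ h0 h1 (n := 8)]
  have D1 : HasDerivAt (fun y : ℝ => 2 - y ^ 2) (-(2 * y)) y := by
    simpa using ((hasDerivAt_pow 2 y).const_sub 2)
  have D2 : HasDerivAt (fun y : ℝ => y ^ 2 - 2 * y + 2) (2 * y - 2) y := by
    have := ((hasDerivAt_pow 2 y).sub ((hasDerivAt_id y).const_mul 2)).add_const 2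
    simpa using this
  have D3 : HasDerivAt (fun y : ℝ => y - 1) 1 y := (hasDerivAt_id y).sub_const 1
  have L1 : HasDerivAt (fun y : ℝ => Real.log (2 - y ^ 2)) (-(2 * y) / (2 - y ^ 2)) y :=
    D1.log hd1
  have L2 : HasDerivAt (fun y : ℝ => Real.log (y ^ 2 - 2 * y + 2))
      ((2 * y - 2) / (y ^ 2 - 2 * y + 2)) y := D2.log hd2
  have A1 : HasDerivAt (fun y : ℝ => Real.arctan (y - 1)) (1 / (1 + (y - 1) ^ 2)) y := by
    simpa [Function.comp_def] using (Real.hasDerivAt_arctan (y - 1)).comp y D3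
  have := ((L1.const_mul 2).sub (L2.const_mul 2)).add (A1.const_mul 4)
  convert this using 1 <;> try rfl
  have h4 : (1 + (y - 1) ^ 2) ≠ 0 := by positivity
  have h5 : y * (y - 2) + 2 ≠ 0 := by nlinarith [sq_nonneg (y - 1)]
  field_simp
  ring

lemma bbp_integral :
    ∫ y in (0 : ℝ)..1, 16 * (4 - 2 * y ^ 3 - y ^ 4 - y ^ 5) / (16 - y ^ 8) = π := by
  have hcont : ContinuousOn (fun y : ℝ => 16 * (4 - 2 * y ^ 3 - y ^ 4 - y ^ 5) / (16 - y ^ 8))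
      (Set.Icc (0 : ℝ) 1) := by
    apply ContinuousOn.div (by fun_prop) (by fun_prop)
    intro y hy
    have := hy.1; have := hy.2
    nlinarith [pow_le_one₀ hy.1 hy.2 (n := 8)]
  have key := intervalIntegral.integral_eq_sub_of_hasDerivAt
    (f := bbpF) (a := 0) (b := 1)
    (fun y hy => bbp_hasDerivAt (by simpa [Set.uIcc_of_le] using hy))
    ((hcont.mono (by simp [Set.uIcc_of_le])).intervalIntegrable)
  rw [key]
  have : bbpF 1 = 0 := by norm_num [bbpF]
  have h0 : bbpF 0 = -π := by
    norm_num [bbpF, Real.arctan_neg, Real.arctan_one]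
    ring
  rw [this, h0]; ring

lemma bbp_term (k : ℕ) :
    ∫ y in (0 : ℝ)..1, (1 / 16 ^ k : ℝ) * y ^ (8 * k) * (4 - 2 * y ^ 3 - y ^ 4 - y ^ 5) =
      (1 / 16 ^ k : ℝ) *
        (4 / (8 * k + 1) - 2 / (8 * k + 4) - 1 / (8 * k + 5) - 1 / (8 * k + 6)) := by
  have hfun : (fun y : ℝ => (1 / 16 ^ k : ℝ) * y ^ (8 * k) * (4 - 2 * y ^ 3 - y ^ 4 - y ^ 5)) =
      fun y : ℝ => (1 / 16 ^ k : ℝ) *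
        (4 * y ^ (8 * k) - 2 * y ^ (8 * k + 3) - y ^ (8 * k + 4) - y ^ (8 * k + 5)) := by
    funext y; ring
  rw [hfun]
  rw [intervalIntegral.integral_const_mul]
  have I : ∀ n : ℕ, IntervalIntegrable (fun y : ℝ => y ^ n) volume 0 1 :=
    fun n => (continuous_pow n).intervalIntegrable 0 1
  rw [intervalIntegral.integral_sub ((((I _).const_mul 4).sub ((I _).const_mul 2)).sub (I _)) (I _),
    intervalIntegral.integral_sub (((I _).const_mul 4).sub ((I _).const_mul 2)) (I _),
    intervalIntegral.integral_sub ((I _).const_mul 4) ((I _).const_mul 2),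
    intervalIntegral.integral_const_mul, intervalIntegral.integral_const_mul,
    integral_pow, integral_pow, integral_pow, integral_pow]
  push_cast
  norm_num
  ring

/-- The Bailey–Borwein–Plouffe formula:
`π = Σ_{k=0}^{∞} 16⁻ᵏ (4/(8k+1) − 2/(8k+4) − 1/(8k+5) − 1/(8k+6))`. -/
theorem sagan_stmt_12 :
    Real.pi = ∑' k : ℕ, (1 / 16 ^ k : ℝ) *
      (4 / (8 * k + 1) - 2 / (8 * k + 4) - 1 / (8 * k + 5) - 1 / (8 * k + 6)) := by
  set f : ℕ → ℝ → ℝ :=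
    fun k y => (1 / 16 ^ k : ℝ) * y ^ (8 * k) * (4 - 2 * y ^ 3 - y ^ 4 - y ^ 5) with hf
  have hterm : ∀ k : ℕ, (1 / 16 ^ k : ℝ) *
      (4 / (8 * k + 1) - 2 / (8 * k + 4) - 1 / (8 * k + 5) - 1 / (8 * k + 6)) =
      ∫ y in Ioc (0 : ℝ) 1, f k y := by
    intro k
    rw [← bbp_term k, intervalIntegral.integral_of_le zero_le_one]
  rw [tsum_congr hterm]
  have hcont : ∀ k, Continuous (f k) := fun k => by fun_prop
  have hint : ∀ k, IntegrableOn (f k) (Ioc (0 : ℝ) 1) := fun k =>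
    (hcont k).integrableOn_Ioc
  have hbound : ∀ k : ℕ, ∀ y ∈ Ioc (0 : ℝ) 1, ‖f k y‖ ≤ 4 * (1 / 16 : ℝ) ^ k := by
    intro k y hy
    obtain ⟨hy0, hy1⟩ := hy
    have h8 : y ^ (8 * k) ≤ 1 := pow_le_one₀ hy0.le hy1
    have h8' : (0 : ℝ) ≤ y ^ (8 * k) := pow_nonneg hy0.le _
    have hc0 : (0 : ℝ) ≤ 4 - 2 * y ^ 3 - y ^ 4 - y ^ 5 := by
      nlinarith [pow_le_one₀ hy0.le hy1 (n := 3), pow_le_one₀ hy0.le hy1 (n := 4),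
        pow_le_one₀ hy0.le hy1 (n := 5)]
    have hc4 : 4 - 2 * y ^ 3 - y ^ 4 - y ^ 5 ≤ 4 := by
      nlinarith [pow_nonneg hy0.le 3, pow_nonneg hy0.le 4, pow_nonneg hy0.le 5]
    have ht : (0 : ℝ) < 1 / 16 ^ k := by positivity
    rw [hf]
    simp only
    rw [Real.norm_eq_abs, abs_of_nonneg (by positivity), one_div_pow]
    have : y ^ (8 * k) * (4 - 2 * y ^ 3 - y ^ 4 - y ^ 5) ≤ 4 := by nlinarith
    calc 1 / 16 ^ k * y ^ (8 * k) * (4 - 2 * y ^ 3 - y ^ 4 - y ^ 5)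
        = 1 / 16 ^ k * (y ^ (8 * k) * (4 - 2 * y ^ 3 - y ^ 4 - y ^ 5)) := by ring
      _ ≤ 1 / 16 ^ k * 4 := by nlinarith
      _ = 4 * (1 / 16 ^ k) := by ring
  have hsum : Summable (fun k : ℕ => ∫ y in Ioc (0 : ℝ) 1, ‖f k y‖) := by
    have hle : ∀ k : ℕ, (∫ y in Ioc (0 : ℝ) 1, ‖f k y‖) ≤ 4 * (1 / 16 : ℝ) ^ k := by
      intro k
      calc (∫ y in Ioc (0 : ℝ) 1, ‖f k y‖)
          ≤ ∫ _ in Ioc (0 : ℝ) 1, 4 * (1 / 16 : ℝ) ^ k :=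
            setIntegral_mono_on (hint k).norm (integrableOn_const (by simp))
              measurableSet_Ioc (hbound k)
        _ = 4 * (1 / 16 : ℝ) ^ k := by simp
    exact Summable.of_nonneg_of_le (fun k => integral_nonneg fun y => norm_nonneg _) hle
      ((summable_geometric_of_lt_one (by norm_num) (by norm_num)).mul_left 4)
  rw [MeasureTheory.integral_tsum_of_summable_integral_norm hint hsum]
  have hpt : Set.EqOn (fun y => ∑' k, f k y)
      (fun y : ℝ => 16 * (4 - 2 * y ^ 3 - y ^ 4 - y ^ 5) / (16 - y ^ 8)) (Ioc (0 : ℝ) 1) := by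
    intro y hy
    obtain ⟨hy0, hy1⟩ := hy
    have hr0 : (0 : ℝ) ≤ y ^ 8 / 16 := by positivity
    have hr1 : y ^ 8 / 16 < 1 := by nlinarith [pow_le_one₀ hy0.le hy1 (n := 8)]
    have hne : (16 : ℝ) - y ^ 8 ≠ 0 := by nlinarith
    simp only
    calc ∑' k, f k y
        = ∑' k : ℕ, (y ^ 8 / 16) ^ k * (4 - 2 * y ^ 3 - y ^ 4 - y ^ 5) := by
          apply tsum_congr; intro k
          rw [hf]; simp only
          rw [div_pow, ← pow_mul]
          ring
      _ = (∑' k : ℕ, (y ^ 8 / 16) ^ k) * (4 - 2 * y ^ 3 - y ^ 4 - y ^ 5) := tsum_mul_right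
      _ = (1 - y ^ 8 / 16)⁻¹ * (4 - 2 * y ^ 3 - y ^ 4 - y ^ 5) := by
          rw [tsum_geometric_of_lt_one hr0 hr1]
      _ = 16 * (4 - 2 * y ^ 3 - y ^ 4 - y ^ 5) / (16 - y ^ 8) := by
          rw [eq_div_iff hne]
          have h16 : (1 - y ^ 8 / 16) ≠ 0 := by intro h; apply hne; linarith [h]
          field_simp
  rw [setIntegral_congr_fun measurableSet_Ioc hpt,
    ← intervalIntegral.integral_of_le zero_le_one, bbp_integral]
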